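/- Let n ≥ 3. The supremum, over all injective families p : Fin n → EuclideanSpace ℝ (Fin 2) of n points in the Euclidean plane, of the minimum angle min { ∠(p i, p j, p k) : i, j, k pairwise distinct } equals π / n, and this supremum is attained (e.g., by the vertices of a regular n-gon). -/

import Mathlib

open Real EuclideanGeometry RealInnerProductSpace

/-! ### Auxiliary lemmas -/

lemma norm_sq_two (u : EuclideanSpace ℝ (Fin 2)) : ‖u‖ ^ 2 = u 0 ^ 2 + u 1 ^ 2 := by
  rw [EuclideanSpace.norm_eq, Fin.sum_univ_two, Real.norm_eq_abs, Real.norm_eq_abs,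
    sq_abs, sq_abs, Real.sq_sqrt (by positivity)]

lemma abs_coord_le (u : EuclideanSpace ℝ (Fin 2)) (i : Fin 2) : |u i| ≤ ‖u‖ := by
  rw [← Real.sqrt_sq_eq_abs, ← Real.sqrt_sq (norm_nonneg u), norm_sq_two]
  apply Real.sqrt_le_sqrt
  fin_cases i <;> simp <;> nlinarith [sq_nonneg (u 0), sq_nonneg (u 1)]

/-- In the closed upper half plane, the unoriented angle between two nonzero vectors is the
absolute difference of their polar angles. -/
lemma angh (v w : EuclideanSpace ℝ (Fin 2)) (hv : v ≠ 0) (hw : w ≠ 0)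
    (hv1 : 0 ≤ v 1) (hw1 : 0 ≤ w 1) :
    InnerProductGeometry.angle v w = |arccos (v 0 / ‖v‖) - arccos (w 0 / ‖w‖)| := by
  have hr : 0 < ‖v‖ := norm_pos_iff.mpr hv
  have hs : 0 < ‖w‖ := norm_pos_iff.mpr hw
  have hv0 : |v 0 / ‖v‖| ≤ 1 := by
    rw [abs_div, abs_of_pos hr]; exact div_le_one_of_le₀ (abs_coord_le v 0) hr.le
  have hw0 : |w 0 / ‖w‖| ≤ 1 := by
    rw [abs_div, abs_of_pos hs]; exact div_le_one_of_le₀ (abs_coord_le w 0) hs.le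
  have hsinv : Real.sin (arccos (v 0 / ‖v‖)) = v 1 / ‖v‖ := by
    rw [Real.sin_arccos]
    have h : 1 - (v 0 / ‖v‖) ^ 2 = (v 1 / ‖v‖) ^ 2 := by
      field_simp
      nlinarith [norm_sq_two v]
    rw [h, Real.sqrt_sq (by positivity)]
  have hsinw : Real.sin (arccos (w 0 / ‖w‖)) = w 1 / ‖w‖ := by
    rw [Real.sin_arccos]
    have h : 1 - (w 0 / ‖w‖) ^ 2 = (w 1 / ‖w‖) ^ 2 := by
      field_simp
      nlinarith [norm_sq_two w]
    rw [h, Real.sqrt_sq (by positivity)]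
  have hcos : Real.cos (arccos (v 0 / ‖v‖) - arccos (w 0 / ‖w‖)) = ⟪v, w⟫ / (‖v‖ * ‖w‖) := by
    rw [Real.cos_sub, Real.cos_arccos (abs_le.mp hv0).1 (abs_le.mp hv0).2,
      Real.cos_arccos (abs_le.mp hw0).1 (abs_le.mp hw0).2, hsinv, hsinw]
    rw [show ⟪v, w⟫ = v 0 * w 0 + v 1 * w 1 by simp [PiLp.inner_apply, Fin.sum_univ_two]; ring]
    field_simp
  have h1 : arccos (v 0 / ‖v‖) ∈ Set.Icc 0 π := ⟨Real.arccos_nonneg _, Real.arccos_le_pi _⟩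
  have h2 : arccos (w 0 / ‖w‖) ∈ Set.Icc 0 π := ⟨Real.arccos_nonneg _, Real.arccos_le_pi _⟩
  rw [InnerProductGeometry.angle, ← hcos, ← Real.cos_abs, Real.arccos_cos (abs_nonneg _)]
  rw [abs_sub_le_iff]
  constructor <;> linarith [h1.1, h1.2, h2.1, h2.2]

/-- A finite set of reals which is pairwise `α`-separated has diameter at least
`(card - 1) * α`. -/
lemma sep_lemma (α : ℝ) (hα : 0 < α) :
    ∀ (m : ℕ) (s : Finset ℝ) (hs : s.Nonempty), s.card = m →
      (∀ a ∈ s, ∀ b ∈ s, a ≠ b → α ≤ |a - b|) →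
      ((m : ℝ) - 1) * α ≤ s.max' hs - s.min' hs := by
  intro m
  induction m with
  | zero => intro s hs hc _; simp [Finset.card_eq_zero] at hc; simp [hc] at hs
  | succ k ih =>
    intro s hs hc hsep
    rcases Nat.eq_zero_or_pos k with hk | hk
    · subst hk
      norm_num
      have := s.min'_le (s.max' hs) (s.max'_mem hs)
      linarith
    · set a := s.min' hs with ha
      have hcard2 : 1 < s.card := by omega
      set s' := s.erase a with hs'
      have hc' : s'.card = k := by
        rw [hs', Finset.card_erase_of_mem (s.min'_mem hs), hc]; omega
      have hs'ne : s'.Nonempty := by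
        rw [← Finset.card_pos, hc']; exact hk
      have hsub : ∀ x ∈ s', x ∈ s := fun x hx => Finset.mem_of_mem_erase hx
      have ihs := ih s' hs'ne hc' (fun x hx y hy hxy => hsep x (hsub x hx) y (hsub y hy) hxy)
      have hmax : s.max' hs ≤ s'.max' hs'ne := by
        apply s'.le_max'
        rw [hs', Finset.mem_erase]
        exact ⟨(Finset.min'_lt_max'_of_card s hcard2).ne', s.max'_mem hs⟩
      have hmin : a + α ≤ s'.min' hs'ne := by
        have hm := s'.min'_mem hs'ne
        have hne : s'.min' hs'ne ≠ a := (Finset.mem_erase.mp hm).1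
        have h1 : α ≤ |s'.min' hs'ne - a| := hsep _ (hsub _ hm) a (s.min'_mem hs) hne
        have h2 : a ≤ s'.min' hs'ne := s.min'_le _ (hsub _ hm)
        rw [abs_of_nonneg (by linarith)] at h1
        linarith
      have hmax2 : s'.max' hs'ne ≤ s.max' hs := s.le_max' _ (hsub _ (s'.max'_mem hs'ne))
      push_cast
      have hk1 : (1:ℝ) ≤ k := by exact_mod_cast hk
      nlinarith

lemma angle_eq_angle_sub (p1 p2 p3 : EuclideanSpace ℝ (Fin 2)) :
    ∠ p1 p2 p3 = InnerProductGeometry.angle (p1 - p2) (p3 - p2) := by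
  rw [EuclideanGeometry.angle, vsub_eq_sub, vsub_eq_sub]

/-! ### The upper bound -/

lemma upper_bound (n : ℕ) (hn : 3 ≤ n) (p : Fin n → EuclideanSpace ℝ (Fin 2))
    (hp : Function.Injective p) (α : ℝ)
    (hl : IsLeast {θ : ℝ | ∃ i j k : Fin n, i ≠ j ∧ j ≠ k ∧ i ≠ k ∧
      θ = ∠ (p i) (p j) (p k)} α) : α ≤ π / n := by
  have hn0 : (0:ℝ) < n := by positivity
  have hπn : 0 < π / n := div_pos Real.pi_pos hn0
  rcases le_or_gt α 0 with hα | hα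
  · linarith
  obtain ⟨j0, -, hj0⟩ := Finset.exists_min_image Finset.univ (fun i => p i 1)
    ⟨⟨0, by omega⟩, Finset.mem_univ _⟩
  simp only [Finset.mem_univ, forall_true_left] at hj0
  set T : Finset (Fin n) := Finset.univ.erase j0 with hT
  have hTmem : ∀ i, i ∈ T ↔ i ≠ j0 := by
    intro i; simp [hT]
  set φ : Fin n → ℝ := fun i => arccos ((p i - p j0) 0 / ‖p i - p j0‖) with hφ
  have hangle : ∀ i ∈ T, ∀ k ∈ T, ∠ (p i) (p j0) (p k) = |φ i - φ k| := by
    intro i hi k hk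
    rw [angle_eq_angle_sub]
    apply angh
    · exact sub_ne_zero.mpr (hp.ne ((hTmem i).mp hi))
    · exact sub_ne_zero.mpr (hp.ne ((hTmem k).mp hk))
    · simpa using sub_nonneg.mpr (hj0 i)
    · simpa using sub_nonneg.mpr (hj0 k)
  have hmemset : ∀ i k : Fin n, i ≠ j0 → k ≠ j0 → i ≠ k →
      α ≤ ∠ (p i) (p j0) (p k) := by
    intro i k hi hk hik
    exact hl.2 ⟨i, j0, k, hi, fun h => hk h.symm, hik, rfl⟩
  have hsepφ : ∀ i ∈ T, ∀ k ∈ T, i ≠ k → α ≤ |φ i - φ k| := by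
    intro i hi k hk hik
    rw [← hangle i hi k hk]
    exact hmemset i k ((hTmem i).mp hi) ((hTmem k).mp hk) hik
  have hinj : Set.InjOn φ T := by
    intro i hi k hk h
    by_contra hik
    have := hsepφ i hi k hk hik
    rw [h, sub_self, abs_zero] at this
    linarith
  set s : Finset ℝ := T.image φ with hs
  have hTcard : T.card = n - 1 := by
    rw [hT, Finset.card_erase_of_mem (Finset.mem_univ _), Finset.card_univ, Fintype.card_fin]
  have hscard : s.card = n - 1 := by
    rw [hs, Finset.card_image_of_injOn hinj, hTcard]
  have hsne : s.Nonempty := by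
    rw [← Finset.card_pos, hscard]; omega
  have hssep : ∀ a ∈ s, ∀ b ∈ s, a ≠ b → α ≤ |a - b| := by
    intro a ha b hb hab
    obtain ⟨i, hi, rfl⟩ := Finset.mem_image.mp ha
    obtain ⟨k, hk, rfl⟩ := Finset.mem_image.mp hb
    exact hsepφ i hi k hk (fun h => hab (by rw [h]))
  have hsep2 := sep_lemma α hα (n-1) s hsne hscard hssep
  obtain ⟨i1, hi1, hφ1⟩ := Finset.mem_image.mp (s.min'_mem hsne)
  obtain ⟨i2, hi2, hφ2⟩ := Finset.mem_image.mp (s.max'_mem hsne)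
  have hscard2 : 1 < s.card := by rw [hscard]; omega
  have hminmax : s.min' hsne < s.max' hsne := Finset.min'_lt_max'_of_card s hscard2
  have hi12 : i1 ≠ i2 := by
    intro h; rw [h, hφ2] at hφ1; linarith
  have hspread : ((n:ℝ) - 2) * α ≤ ∠ (p i1) (p j0) (p i2) := by
    rw [hangle i1 hi1 i2 hi2, hφ1, hφ2, abs_sub_comm,
      abs_of_nonneg (by linarith)]
    have : ((n:ℝ) - 1 - 1) * α ≤ s.max' hsne - s.min' hsne := by
      have hcast : ((n - 1 : ℕ) : ℝ) = (n:ℝ) - 1 := by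
        have : 1 ≤ n := by omega
        push_cast [this]; ring
      rw [hcast] at hsep2; exact hsep2
    linarith
  have hne1 : p j0 ≠ p i1 := hp.ne (fun h => (hTmem i1).mp hi1 h.symm)
  have hne2 : p i2 ≠ p i1 := hp.ne (fun h => hi12 h.symm)
  have htri := EuclideanGeometry.angle_add_angle_add_angle_eq_pi (p i2) hne1
  have ha1 : α ≤ ∠ (p j0) (p i2) (p i1) := by
    rw [EuclideanGeometry.angle_comm]
    exact hl.2 ⟨i1, i2, j0, hi12, fun h => (hTmem i2).mp hi2 h,
      fun h => (hTmem i1).mp hi1 h, rfl⟩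
  have ha2 : α ≤ ∠ (p i2) (p i1) (p j0) := by
    exact hl.2 ⟨i2, i1, j0, hi12.symm, fun h => (hTmem i1).mp hi1 h,
      fun h => (hTmem i2).mp hi2 h, rfl⟩
  have h3 : (3:ℝ) ≤ n := by exact_mod_cast hn
  have hfinal : (n:ℝ) * α ≤ π := by
    have hang1 : ∠ (p i1) (p j0) (p i2) + ∠ (p j0) (p i2) (p i1) +
        ∠ (p i2) (p i1) (p j0) = π := htri
    nlinarith
  rw [le_div_iff₀ hn0]
  nlinarith

/-! ### The regular polygon -/

lemma trig_key (A B C : ℝ) :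
    (cos A - cos B) * (cos C - cos B) + (sin A - sin B) * (sin C - sin B) =
      4 * sin ((A-B)/2) * sin ((C-B)/2) * cos ((A-C)/2) := by
  rw [Real.cos_sub_cos, Real.cos_sub_cos, Real.sin_sub_sin, Real.sin_sub_sin,
    show (A-C)/2 = (A+B)/2 - (C+B)/2 by ring, Real.cos_sub]
  ring

noncomputable def qpt (n : ℕ) (m : ℤ) : EuclideanSpace ℝ (Fin 2) :=
  (WithLp.equiv 2 (Fin 2 → ℝ)).symm ![Real.cos (2*π*m/n), Real.sin (2*π*m/n)]

lemma qpt_apply0 (n : ℕ) (m : ℤ) : qpt n m 0 = Real.cos (2*π*m/n) := rfl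
lemma qpt_apply1 (n : ℕ) (m : ℤ) : qpt n m 1 = Real.sin (2*π*m/n) := rfl

lemma qpt_congr (n : ℕ) (hn : 0 < n) (m m' : ℤ) (h : m % n = m' % n) : qpt n m = qpt n m' := by
  obtain ⟨t, ht⟩ : (n:ℤ) ∣ m' - m := by
    rw [Int.dvd_iff_emod_eq_zero, Int.sub_emod, ← h, sub_self, Int.zero_emod]
  have hm' : m' = m + n * t := by linarith
  subst hm'
  unfold qpt
  have hn0 : (n:ℝ) ≠ 0 := Nat.cast_ne_zero.mpr hn.ne'
  have harg : 2*π*((m + n*t : ℤ):ℝ)/n = 2*π*m/n + t*(2*π) := by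
    push_cast
    field_simp
  rw [harg, Real.cos_add_int_mul_two_pi, Real.sin_add_int_mul_two_pi]

lemma qpt_inner (n : ℕ) (b x y : ℤ) :
    ⟪qpt n (b+x) - qpt n b, qpt n (b+y) - qpt n b⟫ =
      4 * sin (π*x/n) * sin (π*y/n) * cos (π*(x-y)/n) := by
  have key := trig_key (2*π*((b:ℝ)+x)/n) (2*π*(b:ℝ)/n) (2*π*((b:ℝ)+y)/n)
  rw [show (2*π*((b:ℝ)+x)/n - 2*π*(b:ℝ)/n)/2 = π*x/n by ring,
    show (2*π*((b:ℝ)+y)/n - 2*π*(b:ℝ)/n)/2 = π*y/n by ring,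
    show (2*π*((b:ℝ)+x)/n - 2*π*((b:ℝ)+y)/n)/2 = π*(x-y)/n by ring] at key
  rw [show ⟪qpt n (b+x) - qpt n b, qpt n (b+y) - qpt n b⟫ =
      (qpt n (b+x) - qpt n b) 0 * (qpt n (b+y) - qpt n b) 0 +
      (qpt n (b+x) - qpt n b) 1 * (qpt n (b+y) - qpt n b) 1 by
        simp [PiLp.inner_apply, Fin.sum_univ_two]; ring]
  have c0 : ∀ m : ℤ, (qpt n (b+m) - qpt n b) 0 = cos (2*π*((b:ℝ)+m)/n) - cos (2*π*(b:ℝ)/n) := by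
    intro m; simp [qpt_apply0]
  have c1 : ∀ m : ℤ, (qpt n (b+m) - qpt n b) 1 = sin (2*π*((b:ℝ)+m)/n) - sin (2*π*(b:ℝ)/n) := by
    intro m; simp [qpt_apply1]
  rw [c0 x, c0 y, c1 x, c1 y]
  rw [show π*((x:ℝ)-y)/n = π*(((x:ℤ)-(y:ℤ) : ℤ):ℝ)/n by push_cast; ring] at key ⊢
  exact key

lemma qpt_norm (n : ℕ) (b x : ℤ) : ‖qpt n (b+x) - qpt n b‖ = 2 * |sin (π*x/n)| := by
  have h := qpt_inner n b x x
  rw [real_inner_self_eq_norm_sq] at h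
  rw [← Real.sqrt_sq (norm_nonneg _), h]
  rw [show π*((x:ℝ)-x)/n = 0 by ring, Real.cos_zero]
  rw [show 4 * sin (π*x/n) * sin (π*x/n) * 1 = (2*|sin (π*x/n)|)^2 by
    rw [mul_pow]; rw [sq_abs]; ring]
  exact Real.sqrt_sq (by positivity)

lemma sin_pos_aux (n : ℕ) (hn : 3 ≤ n) (z : ℤ) (h1 : 1 ≤ z) (h2 : z ≤ (n:ℤ) - 1) :
    0 < Real.sin (π*z/n) := by
  have hn0 : (0:ℝ) < n := by positivity
  apply Real.sin_pos_of_pos_of_lt_pi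
  · have h1' : (1:ℝ) ≤ (z:ℝ) := by exact_mod_cast h1
    have := Real.pi_pos
    rw [div_pos_iff]
    left
    constructor <;> nlinarith
  · have h2' : (z:ℝ) ≤ (n:ℝ) - 1 := by exact_mod_cast h2
    have := Real.pi_pos
    rw [div_lt_iff₀ hn0]
    nlinarith

lemma qpt_angle (n : ℕ) (hn : 3 ≤ n) (b x y : ℤ)
    (hx1 : 1 ≤ x) (hxn : x ≤ (n:ℤ) - 1) (hy1 : 1 ≤ y) (hyn : y ≤ (n:ℤ) - 1) :
    ∠ (qpt n (b+x)) (qpt n b) (qpt n (b+y)) = π * |(x:ℝ) - y| / n := by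
  have hn0 : (0:ℝ) < n := by positivity
  have hsx := sin_pos_aux n hn x hx1 hxn
  have hsy := sin_pos_aux n hn y hy1 hyn
  rw [EuclideanGeometry.angle, vsub_eq_sub, vsub_eq_sub, InnerProductGeometry.angle,
    qpt_inner n b x y, qpt_norm n b x, qpt_norm n b y,
    abs_of_pos hsx, abs_of_pos hsy]
  have hq : 4 * sin (π*x/n) * sin (π*y/n) * cos (π*(x-y)/n) /
      (2 * sin (π*x/n) * (2 * sin (π*y/n))) = cos (π*(x-y)/n) := by
    field_simp
    ring
  rw [hq]
  have habs : |π * ((x:ℝ) - y) / n| ≤ π := by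
    rw [abs_div, abs_mul, abs_of_pos Real.pi_pos, abs_of_pos hn0, div_le_iff₀ hn0]
    have hxy : |(x:ℝ) - y| ≤ (n:ℝ) := by
      rw [abs_le]
      have hx' : (1:ℝ) ≤ (x:ℝ) := by exact_mod_cast hx1
      have hy' : (1:ℝ) ≤ (y:ℝ) := by exact_mod_cast hy1
      have hx'' : (x:ℝ) ≤ (n:ℝ) - 1 := by exact_mod_cast hxn
      have hy'' : (y:ℝ) ≤ (n:ℝ) - 1 := by exact_mod_cast hyn
      constructor <;> nlinarith
    nlinarith [Real.pi_pos]
  rw [show π*((x:ℝ)-y)/n = π*(x-y)/n from rfl] at habs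
  rw [← Real.cos_abs, Real.arccos_cos (abs_nonneg _) habs]
  rw [abs_div, abs_mul, abs_of_pos Real.pi_pos, abs_of_pos hn0]

lemma fin_eq_of_emod (n : ℕ) (hn : 0 < n) (i j : Fin n)
    (h : ((i:ℤ) - (j:ℤ)) % n = 0) : i = j := by
  have hi : (i:ℤ) < n := by exact_mod_cast i.isLt
  have hj : (j:ℤ) < n := by exact_mod_cast j.isLt
  have hi0 : 0 ≤ (i:ℤ) := by positivity
  have hj0 : 0 ≤ (j:ℤ) := by positivity
  have hn' : (0:ℤ) < n := by exact_mod_cast hn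
  obtain ⟨t, ht⟩ := Int.dvd_of_emod_eq_zero h
  have heq : (i:ℤ) = (j:ℤ) := by
    rcases eq_or_ne t 0 with h' | h'
    · rw [h', mul_zero] at ht; linarith
    · exfalso
      have h1t : 1 ≤ |t| := Int.one_le_abs h'
      have habs : |(i:ℤ) - (j:ℤ)| = (n:ℤ) * |t| := by rw [ht, abs_mul, abs_of_pos hn']
      have hlt2 : |(i:ℤ) - (j:ℤ)| < n := by rw [abs_lt]; omega
      nlinarith
  exact Fin.ext (by exact_mod_cast heq)

lemma fin_step (n : ℕ) (hn : 3 ≤ n) (i j : Fin n) (hij : i ≠ j) :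
    ∃ x : ℤ, 1 ≤ x ∧ x ≤ (n:ℤ) - 1 ∧ ((i:ℤ) - (j:ℤ)) % n = x := by
  have hn' : (0:ℤ) < n := by exact_mod_cast (by omega : 0 < n)
  have h0 : 0 ≤ ((i:ℤ) - (j:ℤ)) % n := Int.emod_nonneg _ (by omega)
  have hlt : ((i:ℤ) - (j:ℤ)) % n < n := Int.emod_lt_of_pos _ hn'
  have hx0 : ((i:ℤ) - (j:ℤ)) % n ≠ 0 := by
    intro h
    exact hij (fin_eq_of_emod n (by omega) i j h)
  exact ⟨((i:ℤ) - (j:ℤ)) % n, by omega, by omega, rfl⟩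

/-! ### The main theorem -/

theorem maximin_angle_plane (n : ℕ) (hn : 3 ≤ n) :
    IsGreatest {α : ℝ | ∃ p : Fin n → EuclideanSpace ℝ (Fin 2), Function.Injective p ∧
      IsLeast {θ : ℝ | ∃ i j k : Fin n, i ≠ j ∧ j ≠ k ∧ i ≠ k ∧
        θ = ∠ (p i) (p j) (p k)} α} (π / n) := by
  have hn0 : (0:ℝ) < n := by positivity
  constructor
  · -- the regular polygon attains π / n
    set p : Fin n → EuclideanSpace ℝ (Fin 2) := fun i => qpt n ((i:ℕ):ℤ) with hpdef
    have hstep : ∀ i j : Fin n, i ≠ j → ∃ x : ℤ, 1 ≤ x ∧ x ≤ (n:ℤ) - 1 ∧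
        ((i:ℤ) - (j:ℤ)) % n = x ∧ p i = qpt n ((j:ℤ) + x) := by
      intro i j hij
      obtain ⟨x, hx1, hxn, hxe⟩ := fin_step n hn i j hij
      refine ⟨x, hx1, hxn, hxe, ?_⟩
      apply qpt_congr n (by omega)
      rw [← hxe, Int.add_emod, Int.emod_emod_of_dvd _ dvd_rfl, ← Int.add_emod]
      congr 1
      ring
    have hformula : ∀ i j k : Fin n, i ≠ j → j ≠ k → i ≠ k →
        ∃ x y : ℤ, 1 ≤ x ∧ x ≤ (n:ℤ) - 1 ∧ 1 ≤ y ∧ y ≤ (n:ℤ) - 1 ∧ x ≠ y ∧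
          ∠ (p i) (p j) (p k) = π * |(x:ℝ) - y| / n := by
      intro i j k hij hjk hik
      obtain ⟨x, hx1, hxn, hxm, hxe⟩ := hstep i j hij
      obtain ⟨y, hy1, hyn, hym, hye⟩ := hstep k j (Ne.symm hjk)
      refine ⟨x, y, hx1, hxn, hy1, hyn, ?_, ?_⟩
      · intro h
        subst h
        apply hik
        apply fin_eq_of_emod n (by omega) i k
        have heq : (i:ℤ) - (k:ℤ) = ((i:ℤ) - (j:ℤ)) - ((k:ℤ) - (j:ℤ)) := by ring
        rw [heq, Int.sub_emod, hxm, hym, sub_self, Int.zero_emod]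
      · rw [hxe, hye, show p j = qpt n ((j:ℤ)) from rfl]
        exact qpt_angle n hn (j:ℤ) x y hx1 hxn hy1 hyn
    have hinj : Function.Injective p := by
      intro i j h
      by_contra hij
      obtain ⟨x, hx1, hxn, -, hxe⟩ := hstep i j hij
      have h0 : qpt n ((j:ℤ) + x) - qpt n (j:ℤ) = 0 := by
        rw [← hxe, show qpt n ((j:ℤ)) = p j from rfl, h, sub_self]
      have hnorm := qpt_norm n (j:ℤ) x
      rw [h0, norm_zero] at hnorm
      have := sin_pos_aux n hn x hx1 hxn
      rw [abs_of_pos this] at hnorm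
      linarith
    refine ⟨p, hinj, ?_, ?_⟩
    · -- π / n is attained
      refine ⟨⟨1, by omega⟩, ⟨0, by omega⟩, ⟨2, by omega⟩, ?_, ?_, ?_, ?_⟩
      · intro h; simpa using congrArg Fin.val h
      · intro h; simpa using congrArg Fin.val h
      · intro h; simpa using congrArg Fin.val h
      · have e1 : p ⟨1, by omega⟩ = qpt n ((0:ℤ) + 1) := by
          rw [hpdef]; norm_num
        have e0 : p ⟨0, by omega⟩ = qpt n (0:ℤ) := by
          rw [hpdef]; norm_num
        have e2 : p ⟨2, by omega⟩ = qpt n ((0:ℤ) + 2) := by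
          rw [hpdef]; norm_num
        rw [e1, e0, e2, qpt_angle n hn 0 1 2 (by omega) (by omega) (by omega) (by omega)]
        norm_num
    · -- π / n is a lower bound for all angles of the polygon
      rintro θ ⟨i, j, k, hij, hjk, hik, rfl⟩
      obtain ⟨x, y, hx1, hxn, hy1, hyn, hxy, hf⟩ := hformula i j k hij hjk hik
      rw [hf]
      have h1 : (1:ℝ) ≤ |(x:ℝ) - y| := by
        have : (1:ℤ) ≤ |x - y| := by
          rcases abs_cases (x - y) with ⟨h', h''⟩ | ⟨h', h''⟩ <;> omega
        calc (1:ℝ) = ((1:ℤ):ℝ) := by norm_num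
        _ ≤ ((|x - y| : ℤ) : ℝ) := by exact_mod_cast this
        _ = |(x:ℝ) - y| := by push_cast; ring_nf
      rw [div_le_div_iff₀ hn0 hn0]
      have hπ := Real.pi_pos
      have h2 : π ≤ π * |(x:ℝ) - y| := by nlinarith
      nlinarith [mul_le_mul_of_nonneg_right h2 hn0.le]
  · rintro α ⟨p, hp, hl⟩
    exact upper_bound n hn p hp α hl
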